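/- arXiv:math/0212230 — 2 statements merged into one kernel-verified Lean document; each statement's English description precedes it below -/
import Mathlib

section
/- For integers 1 ≤ n < N and real D ≥ 2, the quantity (n/N)^{1/D} − Γ(n + 1/D)Γ(N) / (Γ(n)Γ(N + 1/D)) is nonnegative. -/
open Real

lemma gamma_ratio_key (s : ℝ) (hs0 : 0 < s) (hs1 : s ≤ 1) (n : ℕ) (hn : 1 ≤ n) :
    ∀ N : ℕ, n ≤ N →
      Real.Gamma ((n : ℝ) + s) * Real.Gamma N
        ≤ ((n : ℝ) / N) ^ s * (Real.Gamma n * Real.Gamma ((N : ℝ) + s)) := by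
  intro N hNn
  induction N, hNn using Nat.le_induction with
  | base =>
      have hn' : (0:ℝ) < n := by exact_mod_cast hn
      rw [div_self hn'.ne', Real.one_rpow, one_mul, mul_comm]
  | succ N hN ih =>
      have hn' : (0:ℝ) < n := by exact_mod_cast hn
      have hN' : (0:ℝ) < N := lt_of_lt_of_le hn' (by exact_mod_cast hN)
      have hN1 : (0:ℝ) < (N:ℝ) + 1 := by linarith
      have hcast : ((N + 1 : ℕ) : ℝ) = (N : ℝ) + 1 := by push_cast; ring
      have hG1 : Real.Gamma ((N + 1 : ℕ) : ℝ) = (N:ℝ) * Real.Gamma N := by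
        rw [hcast, Real.Gamma_add_one hN'.ne']
      have hG2 : Real.Gamma (((N + 1 : ℕ) : ℝ) + s) = ((N:ℝ) + s) * Real.Gamma ((N:ℝ) + s) := by
        rw [hcast]
        have : (N:ℝ) + 1 + s = ((N:ℝ) + s) + 1 := by ring
        rw [this, Real.Gamma_add_one (by positivity)]
      have hGn : 0 < Real.Gamma (n:ℝ) := Real.Gamma_pos_of_pos hn'
      have hGNs : 0 < Real.Gamma ((N:ℝ) + s) := Real.Gamma_pos_of_pos (by positivity)
      have ihN := ih
      -- Bernoulli step
      have hbern : ((1:ℝ) + 1 / N) ^ s ≤ 1 + s * (1 / N) :=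
        rpow_one_add_le_one_add_mul_self (by
          have h0 : (0:ℝ) ≤ 1/N := by positivity
          linarith) hs0.le hs1
      have hsplit : ((n : ℝ) / N) ^ s = ((n : ℝ) / ((N:ℝ)+1)) ^ s * ((1:ℝ) + 1 / N) ^ s := by
        rw [← Real.mul_rpow (by positivity) (by positivity)]
        congr 1
        field_simp
      have hkey : (N:ℝ) * ((n : ℝ) / N) ^ s ≤ ((N:ℝ) + s) * ((n : ℝ) / ((N:ℝ)+1)) ^ s := by
        rw [hsplit]
        have hpos : (0:ℝ) ≤ ((n : ℝ) / ((N:ℝ)+1)) ^ s := by positivity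
        have h2 : (N:ℝ) * ((1:ℝ) + 1 / N) ^ s ≤ (N:ℝ) + s := by
          calc (N:ℝ) * ((1:ℝ) + 1 / N) ^ s ≤ (N:ℝ) * (1 + s * (1 / N)) := by
                exact mul_le_mul_of_nonneg_left hbern hN'.le
            _ = (N:ℝ) + s := by field_simp
        calc (N:ℝ) * (((n : ℝ) / ((N:ℝ)+1)) ^ s * ((1:ℝ) + 1 / N) ^ s)
            = ((N:ℝ) * ((1:ℝ) + 1 / N) ^ s) * ((n : ℝ) / ((N:ℝ)+1)) ^ s := by ring
          _ ≤ ((N:ℝ) + s) * ((n : ℝ) / ((N:ℝ)+1)) ^ s :=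
              mul_le_mul_of_nonneg_right h2 hpos
      rw [hG1, hG2, hcast]
      calc Real.Gamma ((n : ℝ) + s) * ((N:ℝ) * Real.Gamma N)
          = (Real.Gamma ((n : ℝ) + s) * Real.Gamma N) * (N:ℝ) := by ring
        _ ≤ (((n : ℝ) / N) ^ s * (Real.Gamma n * Real.Gamma ((N:ℝ) + s))) * (N:ℝ) :=
            mul_le_mul_of_nonneg_right ihN hN'.le
        _ = ((N:ℝ) * ((n : ℝ) / N) ^ s) * (Real.Gamma n * Real.Gamma ((N:ℝ) + s)) := by ring
        _ ≤ (((N:ℝ) + s) * ((n : ℝ) / ((N:ℝ)+1)) ^ s) * (Real.Gamma n * Real.Gamma ((N:ℝ) + s)) :=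
            mul_le_mul_of_nonneg_right hkey (by positivity)
        _ = ((n : ℝ) / ((N:ℝ)+1)) ^ s * (Real.Gamma n * (((N:ℝ) + s) * Real.Gamma ((N:ℝ) + s))) := by
            ring

theorem stmt_6 (N n : ℕ) (hn : 1 ≤ n) (hnN : n < N) (D : ℝ) (hD : 2 ≤ D) :
    0 ≤ ((n : ℝ) / N) ^ (1 / D)
      - Real.Gamma ((n : ℝ) + 1 / D) * Real.Gamma N
        / (Real.Gamma n * Real.Gamma ((N : ℝ) + 1 / D)) := by
  have hD0 : (0:ℝ) < D := by linarith
  have hs0 : 0 < 1 / D := by positivity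
  have hs1 : 1 / D ≤ 1 := by
    rw [div_le_one hD0]; linarith
  have hn' : (0:ℝ) < n := by exact_mod_cast hn
  have hN' : (0:ℝ) < N := by
    have : 0 < N := lt_of_le_of_lt (Nat.zero_le n) hnN
    exact_mod_cast this
  have hGn : 0 < Real.Gamma (n:ℝ) := Real.Gamma_pos_of_pos hn'
  have hGNs : 0 < Real.Gamma ((N:ℝ) + 1/D) := Real.Gamma_pos_of_pos (by positivity)
  have h := gamma_ratio_key (1/D) hs0 hs1 n hn N hnN.le
  rw [sub_nonneg, div_le_iff₀ (by positivity)]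
  linarith
end

section
/- For 0 < s < 1, the function f(x) = Γ(x + s)/(Γ(x)·x^s) is strictly increasing on (0, ∞) and tends to 1 as x → ∞; in particular Γ(x + s)/Γ(x) < x^s for all x > 0. -/
open Filter

section Stmt16Aux
open Real



lemma aux_strictConvex {a b : ℝ} (ha : 0 < a) (hab : a < b) :
    StrictConvexOn ℝ (Set.Ici (0:ℝ))
      (fun u => Real.log (b + u) - Real.log (a + u)) := by
  have hb : 0 < b := ha.trans hab
  have hderiv : ∀ u : ℝ, 0 ≤ u →
      HasDerivAt (fun u => Real.log (b + u) - Real.log (a + u))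
        ((b + u)⁻¹ - (a + u)⁻¹) u := by
    intro u hu
    have h1 : HasDerivAt (fun u : ℝ => b + u) 1 u := by
      simpa using (hasDerivAt_id u).const_add b
    have h2 : HasDerivAt (fun u : ℝ => a + u) 1 u := by
      simpa using (hasDerivAt_id u).const_add a
    have hb' : b + u ≠ 0 := by positivity
    have ha' : a + u ≠ 0 := by positivity
    have hd := (h1.log hb').sub (h2.log ha')
    simp only [one_div] at hd
    exact hd
  apply StrictMonoOn.strictConvexOn_of_deriv (convex_Ici 0)
  · intro u hu
    exact ((hderiv u hu).continuousAt).continuousWithinAt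
  · rw [interior_Ici]
    intro u hu v hv huv
    have hu' : (0:ℝ) < u := hu
    have hv' : (0:ℝ) < v := hv
    rw [(hderiv u hu'.le).deriv, (hderiv v hv'.le).deriv]
    have e : ∀ t : ℝ, 0 < t → (b + t)⁻¹ - (a + t)⁻¹ = -((b - a) / ((a + t) * (b + t))) := by
      intro t ht
      have : a + t ≠ 0 := by positivity
      have : b + t ≠ 0 := by positivity
      field_simp
      ring_nf
    rw [e u hu', e v hv', neg_lt_neg_iff]
    apply div_lt_div_of_pos_left (by linarith) (by positivity)
    apply mul_lt_mul' (by linarith) (by linarith) (by positivity) (by positivity)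

lemma aux_conv_ineq {s a b : ℝ} (hs : 0 < s) (hs' : s < 1) (ha : 0 < a) (hab : a < b)
    {c : ℝ} (hc : 0 ≤ c) :
    (Real.log (b + s + c) - Real.log (a + s + c)) <
      (1 - s) * (Real.log (b + c) - Real.log (a + c)) +
        s * (Real.log (b + (c + 1)) - Real.log (a + (c + 1))) := by
  have h := (aux_strictConvex ha hab).2 (Set.mem_Ici.mpr hc)
    (Set.mem_Ici.mpr (by linarith : (0:ℝ) ≤ c + 1)) (by linarith)
    (by linarith : (0:ℝ) < 1 - s) hs (by ring)
  simp only [smul_eq_mul] at h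
  have e : (1 - s) * c + s * (c + 1) = c + s := by ring
  rw [e] at h
  have e2 : b + (c + s) = b + s + c := by ring
  have e3 : a + (c + s) = a + s + c := by ring
  rw [e2, e3] at h
  exact h

lemma aux_L_diff {s a b : ℝ} (hs : 0 < s) (hs' : s < 1) (ha : 0 < a) (hab : a < b) (n : ℕ) :
    ((Real.log b - Real.log a) - (Real.log (b + s) - Real.log (a + s)))
      - s * ((Real.log b - Real.log a) - (Real.log (b + 1) - Real.log (a + 1)))
      - s * (Real.log (b + (↑n + 1)) - Real.log (a + (↑n + 1)))
    ≤ (s * Real.log n + (∑ k ∈ Finset.range (n + 1),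
          (Real.log (b + k) - Real.log (b + s + k))) - s * Real.log b)
      - (s * Real.log n + (∑ k ∈ Finset.range (n + 1),
          (Real.log (a + k) - Real.log (a + s + k))) - s * Real.log a) := by
  set f : ℕ → ℝ := fun k => Real.log (b + k) - Real.log (a + k) with hf
  set A : ℕ → ℝ := fun k => f k - (Real.log (b + s + k) - Real.log (a + s + k)) with hA
  have hAk : ∀ k : ℕ, s * (f k - f (k + 1)) < A k := by
    intro k
    have h := aux_conv_ineq hs hs' ha hab (c := (k : ℝ)) (Nat.cast_nonneg k)
    simp only [hA, hf]
    push_cast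
    nlinarith [h]
  -- rewrite RHS
  have hsplit : (∑ k ∈ Finset.range (n + 1), A k)
      = (∑ k ∈ Finset.range (n + 1), (Real.log (b + k) - Real.log (b + s + k)))
        - (∑ k ∈ Finset.range (n + 1), (Real.log (a + k) - Real.log (a + s + k))) := by
    rw [← Finset.sum_sub_distrib]
    apply Finset.sum_congr rfl
    intro k _
    simp only [hA, hf]; ring
  have hsum : (∑ k ∈ Finset.range (n + 1), A k)
      = (∑ i ∈ Finset.range n, A (i + 1)) + A 0 := Finset.sum_range_succ' A n
  have htel : (∑ i ∈ Finset.range n, s * (f (i+1) - f (i+2)))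
      = s * (f 1 - f (n+1)) := by
    rw [← Finset.mul_sum]
    congr 1
    exact Finset.sum_range_sub' (fun i => f (i+1)) n
  have hge : (∑ i ∈ Finset.range n, s * (f (i+1) - f (i+2))) ≤ ∑ i ∈ Finset.range n, A (i+1) := by
    apply Finset.sum_le_sum
    intro i _
    exact (hAk (i+1)).le
  rw [htel] at hge
  have h0 := hAk 0
  norm_num at h0
  have e1 : f 1 = Real.log (b + 1) - Real.log (a + 1) := by norm_num [hf]
  have e2 : f (n + 1) = Real.log (b + (↑n + 1)) - Real.log (a + (↑n + 1)) := by
    simp only [hf]; push_cast; ring_nf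
  have eA0 : A 0 = (Real.log b - Real.log a) - (Real.log (b + s) - Real.log (a + s)) := by
    simp [hA, hf]
  have e0 : f 0 = Real.log b - Real.log a := by simp [hf]
  rw [e1, e2] at hge
  rw [e0, e1, eA0] at h0
  rw [hsplit] at hsum
  -- hsum : big-sum-difference = Σ A(i+1) + A 0
  rw [eA0] at hsum
  nlinarith [hge, h0, hsum]

lemma aux_exp_L {s x : ℝ} (hs : 0 < s) (hx : 0 < x) {n : ℕ} (hn : 1 ≤ n) :
    Real.exp (s * Real.log n + (∑ k ∈ Finset.range (n + 1),
        (Real.log (x + k) - Real.log (x + s + k))) - s * Real.log x)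
      = Real.GammaSeq (x + s) n / Real.GammaSeq x n / x ^ s := by
  have hn0 : (0:ℝ) < n := by exact_mod_cast hn
  have hprod1 : (0:ℝ) < ∏ j ∈ Finset.range (n + 1), (x + j) :=
    Finset.prod_pos fun j _ => by positivity
  have hprod2 : (0:ℝ) < ∏ j ∈ Finset.range (n + 1), (x + s + j) :=
    Finset.prod_pos fun j _ => by positivity
  have hfac : (0:ℝ) < (Nat.factorial n : ℝ) := by exact_mod_cast n.factorial_pos
  have hexp_sum : Real.exp (∑ k ∈ Finset.range (n + 1),
        (Real.log (x + k) - Real.log (x + s + k)))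
      = (∏ j ∈ Finset.range (n + 1), (x + j)) / (∏ j ∈ Finset.range (n + 1), (x + s + j)) := by
    rw [Real.exp_sum]
    rw [← Finset.prod_div_distrib]
    apply Finset.prod_congr rfl
    intro k _
    rw [Real.exp_sub, Real.exp_log (by positivity), Real.exp_log (by positivity)]
  rw [sub_eq_add_neg, Real.exp_add, Real.exp_add, hexp_sum]
  rw [show Real.exp (s * Real.log n) = (n:ℝ) ^ s by
    rw [Real.rpow_def_of_pos hn0, mul_comm]]
  rw [show Real.exp (-(s * Real.log x)) = (x ^ s)⁻¹ by
    rw [Real.exp_neg, Real.rpow_def_of_pos hx, mul_comm]]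
  rw [Real.GammaSeq, Real.GammaSeq]
  rw [Real.rpow_add hn0]
  have hxs : (0:ℝ) < x ^ s := Real.rpow_pos_of_pos hx s
  have hnx : (0:ℝ) < (n:ℝ) ^ x := Real.rpow_pos_of_pos hn0 x
  field_simp

lemma aux_tendsto_L {s x : ℝ} (hs : 0 < s) (hx : 0 < x) :
    Tendsto (fun n : ℕ => s * Real.log n + (∑ k ∈ Finset.range (n + 1),
        (Real.log (x + k) - Real.log (x + s + k))) - s * Real.log x) atTop
      (nhds (Real.log (Real.Gamma (x + s) / (Real.Gamma x * x ^ s)))) := by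
  have hΓx : 0 < Real.Gamma x := Real.Gamma_pos_of_pos hx
  have hΓxs : 0 < Real.Gamma (x + s) := Real.Gamma_pos_of_pos (by linarith)
  have hxs : (0:ℝ) < x ^ s := Real.rpow_pos_of_pos hx s
  have T : Tendsto (fun n : ℕ => Real.GammaSeq (x + s) n / Real.GammaSeq x n / x ^ s) atTop
      (nhds (Real.Gamma (x + s) / Real.Gamma x / x ^ s)) :=
    ((Real.GammaSeq_tendsto_Gamma (x + s)).div (Real.GammaSeq_tendsto_Gamma x) hΓx.ne').div_const _
  have hFpos : (0:ℝ) < Real.Gamma (x + s) / Real.Gamma x / x ^ s := by positivity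
  have Tlog := T.log hFpos.ne'
  rw [show Real.Gamma (x + s) / Real.Gamma x / x ^ s
      = Real.Gamma (x + s) / (Real.Gamma x * x ^ s) from div_div _ _ _] at Tlog
  apply Tlog.congr'
  filter_upwards [eventually_ge_atTop 1] with n hn
  rw [← aux_exp_L hs hx hn, Real.log_exp]

lemma aux_mono {s : ℝ} (hs : 0 < s) (hs' : s < 1) :
    StrictMonoOn (fun x : ℝ => Real.Gamma (x + s) / (Real.Gamma x * x ^ s)) (Set.Ioi 0) := by
  intro a ha b hb hab
  replace ha : (0:ℝ) < a := ha
  replace hb : (0:ℝ) < b := hb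
  set δ0 : ℝ := ((Real.log b - Real.log a) - (Real.log (b + s) - Real.log (a + s)))
      - s * ((Real.log b - Real.log a) - (Real.log (b + 1) - Real.log (a + 1))) with hδ0def
  have hδ0 : 0 < δ0 := by
    have h := aux_conv_ineq hs hs' ha hab (c := 0) le_rfl
    norm_num at h
    rw [hδ0def]
    nlinarith [h]
  -- limit of the tail term
  have hgt : Tendsto (fun n : ℕ => Real.log (b + (↑n + 1)) - Real.log (a + (↑n + 1)))
      atTop (nhds 0) := by
    have h1 : Tendsto (fun n : ℕ => a + (↑n + 1)) atTop atTop := by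
      have := tendsto_natCast_atTop_atTop (R := ℝ)
      have h2 := tendsto_atTop_add_const_right atTop (a + 1) this
      apply h2.congr
      intro n; ring
    have h2 : Tendsto (fun n : ℕ => (b - a) / (a + (↑n + 1))) atTop (nhds 0) :=
      tendsto_const_nhds.div_atTop h1
    have h3 : Tendsto (fun n : ℕ => 1 + (b - a) / (a + (↑n + 1))) atTop (nhds 1) := by
      have := h2.const_add 1
      simpa using this
    have h4 := h3.log one_ne_zero
    rw [Real.log_one] at h4
    apply h4.congr
    intro n
    have hpa : (0:ℝ) < a + (↑n + 1) := by positivity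
    have hpb : (0:ℝ) < b + (↑n + 1) := by positivity
    rw [show 1 + (b - a) / (a + (↑n + 1)) = (b + (↑n + 1)) / (a + (↑n + 1)) by
      field_simp; ring]
    rw [Real.log_div hpb.ne' hpa.ne']
  have hlim : Tendsto (fun n : ℕ => δ0 - s * (Real.log (b + (↑n + 1)) - Real.log (a + (↑n + 1))))
      atTop (nhds δ0) := by
    have h5 := Filter.Tendsto.sub (f := fun _ : ℕ => δ0)
      (tendsto_const_nhds) (hgt.const_mul s)
    simpa using h5
  have hdiff := (aux_tendsto_L hs hb).sub (aux_tendsto_L hs ha)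
  have key : δ0 ≤ Real.log (Real.Gamma (b + s) / (Real.Gamma b * b ^ s))
      - Real.log (Real.Gamma (a + s) / (Real.Gamma a * a ^ s)) :=
    le_of_tendsto_of_tendsto' hlim hdiff (fun n => aux_L_diff hs hs' ha hab n)
  have hFa : 0 < Real.Gamma (a + s) / (Real.Gamma a * a ^ s) := by
    have := Real.Gamma_pos_of_pos ha
    have := Real.Gamma_pos_of_pos (show (0:ℝ) < a + s by linarith)
    have := Real.rpow_pos_of_pos ha s
    positivity
  have hFb : 0 < Real.Gamma (b + s) / (Real.Gamma b * b ^ s) := by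
    have := Real.Gamma_pos_of_pos hb
    have := Real.Gamma_pos_of_pos (show (0:ℝ) < b + s by linarith)
    have := Real.rpow_pos_of_pos hb s
    positivity
  have hlog : Real.log (Real.Gamma (a + s) / (Real.Gamma a * a ^ s))
      < Real.log (Real.Gamma (b + s) / (Real.Gamma b * b ^ s)) := by linarith
  have := Real.exp_lt_exp.mpr hlog
  rwa [Real.exp_log hFa, Real.exp_log hFb] at this

lemma aux_upper {s x : ℝ} (hs : 0 < s) (hs' : s < 1) (hx : 0 < x) :
    Real.Gamma (x + s) ≤ Real.Gamma x * x ^ s := by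
  have hΓx : 0 < Real.Gamma x := Real.Gamma_pos_of_pos hx
  have hΓxs : 0 < Real.Gamma (x + s) := Real.Gamma_pos_of_pos (by linarith)
  have h := Real.convexOn_log_Gamma.2 (Set.mem_Ioi.mpr hx)
    (Set.mem_Ioi.mpr (show (0:ℝ) < x + 1 by linarith))
    (by linarith : (0:ℝ) ≤ 1 - s) hs.le (by ring)
  simp only [smul_eq_mul, Function.comp_apply] at h
  rw [show (1 - s) * x + s * (x + 1) = x + s by ring] at h
  rw [Real.Gamma_add_one hx.ne', Real.log_mul hx.ne' hΓx.ne'] at h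
  have h2 : Real.log (Real.Gamma (x + s)) ≤ Real.log (Real.Gamma x) + s * Real.log x := by
    nlinarith [h]
  have h3 := Real.exp_le_exp.mpr h2
  rwa [Real.exp_log hΓxs, Real.exp_add, Real.exp_log hΓx,
    show Real.exp (s * Real.log x) = x ^ s by rw [Real.rpow_def_of_pos hx, mul_comm]] at h3

lemma aux_lower {s x : ℝ} (hs : 0 < s) (hs' : s < 1) (hx : 1 < x) :
    Real.Gamma x * (x + s - 1) ^ s ≤ Real.Gamma (x + s) := by
  have hx0 : 0 < x := by linarith
  have hy : 0 < x + s - 1 := by linarith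
  have hΓx : 0 < Real.Gamma x := Real.Gamma_pos_of_pos hx0
  have hΓxs : 0 < Real.Gamma (x + s) := Real.Gamma_pos_of_pos (by linarith)
  have hΓy : 0 < Real.Gamma (x + s - 1) := Real.Gamma_pos_of_pos hy
  have h := Real.convexOn_log_Gamma.2 (Set.mem_Ioi.mpr hy)
    (Set.mem_Ioi.mpr (show (0:ℝ) < x + s by linarith))
    hs.le (by linarith : (0:ℝ) ≤ 1 - s) (by ring)
  simp only [smul_eq_mul, Function.comp_apply] at h
  rw [show s * (x + s - 1) + (1 - s) * (x + s) = x by ring] at h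
  have hrec : Real.Gamma (x + s) = (x + s - 1) * Real.Gamma (x + s - 1) := by
    rw [← Real.Gamma_add_one hy.ne']
    ring_nf
  have hlogrec : Real.log (Real.Gamma (x + s - 1))
      = Real.log (Real.Gamma (x + s)) - Real.log (x + s - 1) := by
    rw [hrec, Real.log_mul hy.ne' hΓy.ne']
    ring
  rw [hlogrec] at h
  have h2 : Real.log (Real.Gamma x) + s * Real.log (x + s - 1)
      ≤ Real.log (Real.Gamma (x + s)) := by nlinarith [h]
  have h3 := Real.exp_le_exp.mpr h2
  rwa [Real.exp_log hΓxs, Real.exp_add, Real.exp_log hΓx,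
    show Real.exp (s * Real.log (x + s - 1)) = (x + s - 1) ^ s by
      rw [Real.rpow_def_of_pos hy, mul_comm]] at h3

lemma aux_tendsto_one {s : ℝ} (hs : 0 < s) (hs' : s < 1) :
    Tendsto (fun x : ℝ => Real.Gamma (x + s) / (Real.Gamma x * x ^ s)) atTop (nhds 1) := by
  have hlow : Tendsto (fun x : ℝ => ((x + s - 1) / x) ^ s) atTop (nhds 1) := by
    have h1 : Tendsto (fun x : ℝ => (s - 1) / x) atTop (nhds 0) :=
      tendsto_const_nhds.div_atTop tendsto_id
    have h2 : Tendsto (fun x : ℝ => 1 + (s - 1) / x) atTop (nhds 1) := by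
      simpa using h1.const_add 1
    have h3 : Tendsto (fun x : ℝ => (x + s - 1) / x) atTop (nhds 1) := by
      apply h2.congr'
      filter_upwards [eventually_gt_atTop 0] with x hx
      field_simp
      ring
    have h4 := h3.rpow_const (p := s) (Or.inr hs.le)
    rwa [Real.one_rpow] at h4
  apply tendsto_of_tendsto_of_tendsto_of_le_of_le' hlow tendsto_const_nhds
  · filter_upwards [eventually_gt_atTop 1] with x hx
    have hx0 : 0 < x := by linarith
    have hy : 0 < x + s - 1 := by linarith
    have hΓx : 0 < Real.Gamma x := Real.Gamma_pos_of_pos hx0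
    have hxs : 0 < x ^ s := Real.rpow_pos_of_pos hx0 s
    rw [Real.div_rpow hy.le hx0.le]
    rw [div_le_div_iff₀ hxs (by positivity)]
    calc (x + s - 1) ^ s * (Real.Gamma x * x ^ s)
        = (Real.Gamma x * (x + s - 1) ^ s) * x ^ s := by ring
      _ ≤ Real.Gamma (x + s) * x ^ s := by
          have := aux_lower hs hs' hx
          exact mul_le_mul_of_nonneg_right this hxs.le
  · filter_upwards [eventually_gt_atTop 0] with x hx
    have hΓx : 0 < Real.Gamma x := Real.Gamma_pos_of_pos hx
    have hxs : 0 < x ^ s := Real.rpow_pos_of_pos hx s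
    rw [div_le_one (by positivity)]
    simpa using aux_upper hs hs' hx

theorem stmt16_main {s : ℝ} (hs : 0 < s) (hs' : s < 1) :
    ∀ x : ℝ, 0 < x → Real.Gamma (x + s) / Real.Gamma x < x ^ s := by
  intro x hx
  have hΓx : 0 < Real.Gamma x := Real.Gamma_pos_of_pos hx
  have hxs : 0 < x ^ s := Real.rpow_pos_of_pos hx s
  rw [div_lt_iff₀ hΓx]
  by_contra hcon
  push_neg at hcon
  -- F x ≥ 1
  have hFx : 1 ≤ Real.Gamma (x + s) / (Real.Gamma x * x ^ s) := by
    rw [le_div_iff₀ (by positivity), one_mul]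
    linarith [hcon]
  have hmono := aux_mono hs hs'
  have hstep : Real.Gamma (x + s) / (Real.Gamma x * x ^ s)
      < Real.Gamma ((x + 1) + s) / (Real.Gamma (x + 1) * (x + 1) ^ s) :=
    hmono (Set.mem_Ioi.mpr hx) (Set.mem_Ioi.mpr (by linarith)) (by linarith)
  have hev : ∀ᶠ y in atTop, Real.Gamma ((x + 1) + s) / (Real.Gamma (x + 1) * (x + 1) ^ s)
      ≤ Real.Gamma (y + s) / (Real.Gamma y * y ^ s) := by
    filter_upwards [eventually_ge_atTop (x + 1)] with y hy
    rcases eq_or_lt_of_le hy with h | h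
    · rw [← h]
    · exact (hmono (Set.mem_Ioi.mpr (by linarith)) (Set.mem_Ioi.mpr (by linarith)) h).le
  have := ge_of_tendsto (aux_tendsto_one hs hs') hev
  linarith

end Stmt16Aux

theorem stmt_16 (s : ℝ) (hs : 0 < s) (hs' : s < 1) :
    StrictMonoOn (fun x : ℝ => Real.Gamma (x + s) / (Real.Gamma x * x ^ s)) (Set.Ioi 0)
    ∧ Tendsto (fun x : ℝ => Real.Gamma (x + s) / (Real.Gamma x * x ^ s)) atTop (nhds 1)
    ∧ ∀ x : ℝ, 0 < x → Real.Gamma (x + s) / Real.Gamma x < x ^ s :=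
  ⟨aux_mono hs hs', aux_tendsto_one hs hs', stmt16_main hs hs'⟩
end
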